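/- arXiv:1308.4040 — 6 statements merged into one kernel-verified Lean document; each statement's English description precedes it below -/
import Mathlib

section
/- Let N be an odd positive integer and n = 8N. Then there are no integers x, y, z such that x^4 + y^4 + z^4 - 2x^2y^2 - 2y^2z^2 - 2z^2x^2 = n. -/
lemma aux16 : ∀ a b c : ZMod 16,
    a^4 + b^4 + c^4 - 2*a^2*b^2 - 2*b^2*c^2 - 2*c^2*a^2 ≠ 8 := by decide

theorem stmt5 (N : ℤ) (hN : 0 < N) (hodd : Odd N) (n : ℤ) (hn : n = 8 * N) :
    ¬ ∃ x y z : ℤ, x^4 + y^4 + z^4 - 2*x^2*y^2 - 2*y^2*z^2 - 2*z^2*x^2 = n := by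
  rintro ⟨x, y, z, h⟩
  obtain ⟨k, hk⟩ := hodd
  subst hn hk
  have h16 := congrArg (fun t : ℤ => (t : ZMod 16)) h
  push_cast at h16
  apply aux16 (x : ZMod 16) (y : ZMod 16) (z : ZMod 16)
  rw [h16]
  have h0 : (16 : ZMod 16) = 0 := by decide
  ring_nf
  linear_combination (k : ZMod 16) * h0
end

section
/- There are no integers x, y, z with x^4 + y^4 + z^4 - 2x^2y^2 - 2y^2z^2 - 2z^2x^2 = 24. -/
theorem stmt6 :
    ¬ ∃ x y z : ℤ, x^4 + y^4 + z^4 - 2*x^2*y^2 - 2*y^2*z^2 - 2*z^2*x^2 = 24 := by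
  rintro ⟨x, y, z, h⟩
  have h16 : ((x^4 + y^4 + z^4 - 2*x^2*y^2 - 2*y^2*z^2 - 2*z^2*x^2 : ℤ) : ZMod 16) = 24 := by
    exact_mod_cast congrArg (Int.cast : ℤ → ZMod 16) h
  push_cast at h16
  revert h16
  generalize (x : ZMod 16) = a
  generalize (y : ZMod 16) = b
  generalize (z : ZMod 16) = c
  revert a b c
  decide
end

section
/- Let n be a positive integer. The equation x^4 + y^4 + z^4 - 2x^2y^2 - 2y^2z^2 - 2z^2x^2 = n has an integer solution if and only if there exist positive integers a, b, c, d with a + d = b + c, a*b*c*d = n, and a ≡ b ≡ c ≡ d (mod 2). -/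
lemma aux9 (n : ℤ) (hn : 0 < n) (x y z : ℤ) (hz : 0 ≤ z) (hzy : z ≤ y) (hyx : y ≤ x)
    (h : x^4 + y^4 + z^4 - 2*x^2*y^2 - 2*y^2*z^2 - 2*z^2*x^2 = n) :
    (∃ a b c d : ℤ, 0 < a ∧ 0 < b ∧ 0 < c ∧ 0 < d ∧
      a + d = b + c ∧ a * b * c * d = n ∧
      a % 2 = b % 2 ∧ b % 2 = c % 2 ∧ c % 2 = d % 2) := by
  have hprod : (x+y+z) * (x+y-z) * (x-y+z) * (x-y-z) = n := by linear_combination h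
  have ha : 0 < x + y + z := by
    rcases lt_or_eq_of_le (by linarith : (0:ℤ) ≤ x + y + z) with h' | h'
    · exact h'
    · exfalso
      have : (x+y+z) * (x+y-z) * (x-y+z) * (x-y-z) = 0 := by rw [← h']; ring
      omega
  have hb : 0 < x + y - z := by
    rcases lt_or_eq_of_le (by linarith : (0:ℤ) ≤ x + y - z) with h' | h'
    · exact h'
    · exfalso
      have : (x+y+z) * (x+y-z) * (x-y+z) * (x-y-z) = 0 := by rw [← h']; ring
      omega
  have hc : 0 < x - y + z := by
    rcases lt_or_eq_of_le (by linarith : (0:ℤ) ≤ x - y + z) with h' | h'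
    · exact h'
    · exfalso
      have : (x+y+z) * (x+y-z) * (x-y+z) * (x-y-z) = 0 := by rw [← h']; ring
      omega
  have hd : 0 < x - y - z := by
    by_contra hd'
    push_neg at hd'
    have : (x+y+z) * (x+y-z) * (x-y+z) * (x-y-z) ≤ 0 := by
      have h1 : 0 < (x+y+z) * (x+y-z) * (x-y+z) := by positivity
      exact mul_nonpos_of_nonneg_of_nonpos (le_of_lt h1) hd'
    omega
  exact ⟨x+y+z, x+y-z, x-y+z, x-y-z, ha, hb, hc, hd, by ring, hprod,
    by omega, by omega, by omega⟩

theorem stmt9 (n : ℕ) (hn : 0 < n) :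
    (∃ x y z : ℤ, x^4 + y^4 + z^4 - 2*x^2*y^2 - 2*y^2*z^2 - 2*z^2*x^2 = (n : ℤ)) ↔
    (∃ a b c d : ℤ, 0 < a ∧ 0 < b ∧ 0 < c ∧ 0 < d ∧
      a + d = b + c ∧ a * b * c * d = (n : ℤ) ∧
      a % 2 = b % 2 ∧ b % 2 = c % 2 ∧ c % 2 = d % 2) := by
  have hn' : (0:ℤ) < n := by exact_mod_cast hn
  constructor
  · rintro ⟨x, y, z, h⟩
    have h4 : ∀ t : ℤ, |t|^4 = t^4 := fun t => by rw [show (4:ℕ) = 2*2 from rfl, pow_mul, pow_mul, sq_abs]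
    have key : |x|^4 + |y|^4 + |z|^4 - 2*|x|^2*|y|^2 - 2*|y|^2*|z|^2 - 2*|z|^2*|x|^2 = (n:ℤ) := by
      rw [h4, h4, h4, sq_abs, sq_abs, sq_abs]; exact h
    rcases le_total |x| |y| with h1 | h1 <;> rcases le_total |y| |z| with h2 | h2 <;>
      rcases le_total |x| |z| with h3 | h3
    · exact aux9 n hn' |z| |y| |x| (abs_nonneg x) h1 h2 (by linear_combination key)
    · exact aux9 n hn' |z| |y| |x| (abs_nonneg x) h1 h2 (by linear_combination key)
    · exact aux9 n hn' |y| |z| |x| (abs_nonneg x) h3 h2 (by linear_combination key)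
    · exact aux9 n hn' |y| |x| |z| (abs_nonneg z) h3 h1 (by linear_combination key)
    · exact aux9 n hn' |z| |x| |y| (abs_nonneg y) h1 h3 (by linear_combination key)
    · exact aux9 n hn' |x| |z| |y| (abs_nonneg y) h2 h3 (by linear_combination key)
    · exact aux9 n hn' |x| |y| |z| (abs_nonneg z) h2 h1 (by linear_combination key)
    · exact aux9 n hn' |x| |y| |z| (abs_nonneg z) h2 h1 (by linear_combination key)
  · rintro ⟨a, b, c, d, ha, hb, hc, hd, hsum, hprod, p1, p2, p3⟩
    obtain ⟨x, hx⟩ : ∃ x : ℤ, a + d = 2 * x := ⟨(a+d)/2, by omega⟩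
    obtain ⟨y, hy⟩ : ∃ y : ℤ, a - c = 2 * y := ⟨(a-c)/2, by omega⟩
    obtain ⟨z, hz⟩ : ∃ z : ℤ, a - b = 2 * z := ⟨(a-b)/2, by omega⟩
    refine ⟨x, y, z, ?_⟩
    have ea : a = x + y + z := by omega
    have eb : b = x + y - z := by omega
    have ec : c = x - y + z := by omega
    have ed : d = x - y - z := by omega
    rw [ea, eb, ec, ed] at hprod
    linear_combination hprod
end

section
/- There are no integers x, y, z with x^4 + y^4 + z^4 - 2x^2y^2 - 2y^2z^2 - 2z^2x^2 = 4. -/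
theorem stmt11 :
    ¬ ∃ x y z : ℤ, x^4 + y^4 + z^4 - 2*x^2*y^2 - 2*y^2*z^2 - 2*z^2*x^2 = 4 := by
  rintro ⟨x, y, z, h⟩
  have h16 : ((x : ZMod 16))^4 + (y : ZMod 16)^4 + (z : ZMod 16)^4
      - 2*(x : ZMod 16)^2*(y : ZMod 16)^2 - 2*(y : ZMod 16)^2*(z : ZMod 16)^2
      - 2*(z : ZMod 16)^2*(x : ZMod 16)^2 = 4 := by
    exact_mod_cast congrArg (Int.cast : ℤ → ZMod 16) h
  revert h16
  generalize (x : ZMod 16) = a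
  generalize (y : ZMod 16) = b
  generalize (z : ZMod 16) = c
  revert a b c
  decide
end

section
/- Let p and q be distinct primes. Then there are no integers x, y, z with x^4 + y^4 + z^4 - 2x^2y^2 - 2y^2z^2 - 2z^2x^2 = p*q. -/
-- case where p divides one factor and q another
lemma keyL1 (p q : ℕ) (hp : p.Prime) (hq : q.Prime) (hpq : p ≠ q) (a b c d : ℤ)
    (hs : a + b + c + d = 0) (hprod : a * b * c * d = (p : ℤ) * q)
    (hpa : (p : ℤ) ∣ a) (hqb : (q : ℤ) ∣ b) : False := by
  obtain ⟨s, rfl⟩ := hpa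
  obtain ⟨t, rfl⟩ := hqb
  have hpq0 : ((p : ℤ) * q) ≠ 0 := by
    have := hp.pos; have := hq.pos; positivity
  have hcancel : s * t * c * d = 1 := by
    apply mul_left_cancel₀ hpq0
    linear_combination hprod
  have hs1 : s = 1 ∨ s = -1 :=
    Int.isUnit_iff.mp (IsUnit.of_mul_eq_one (a := s) (t * c * d) (by linear_combination hcancel))
  have ht1 : t = 1 ∨ t = -1 :=
    Int.isUnit_iff.mp (IsUnit.of_mul_eq_one (a := t) (s * c * d) (by linear_combination hcancel))
  have hc1 : c = 1 ∨ c = -1 :=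
    Int.isUnit_iff.mp (IsUnit.of_mul_eq_one (a := c) (s * t * d) (by linear_combination hcancel))
  have hd1 : d = 1 ∨ d = -1 :=
    Int.isUnit_iff.mp (IsUnit.of_mul_eq_one (a := d) (s * t * c) (by linear_combination hcancel))
  have h2p := hp.two_le
  have h2q := hq.two_le
  rcases hs1 with rfl | rfl <;> rcases ht1 with rfl | rfl <;>
    rcases hc1 with rfl | rfl <;> rcases hd1 with rfl | rfl <;> omega

-- case where p and q divide the same factor
lemma keyL0 (p q : ℕ) (hp : p.Prime) (hq : q.Prime) (hpq : p ≠ q) (a b c d : ℤ)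
    (hs : a + b + c + d = 0) (hprod : a * b * c * d = (p : ℤ) * q)
    (hpa : (p : ℤ) ∣ a) (hqa : (q : ℤ) ∣ a) : False := by
  have hco : IsCoprime (p : ℤ) (q : ℤ) :=
    Nat.isCoprime_iff_coprime.mpr ((Nat.coprime_primes hp hq).mpr hpq)
  obtain ⟨t, rfl⟩ := hco.mul_dvd hpa hqa
  have hpq0 : ((p : ℤ) * q) ≠ 0 := by
    have := hp.pos; have := hq.pos; positivity
  have hcancel : t * b * c * d = 1 := by
    apply mul_left_cancel₀ hpq0
    linear_combination hprod
  have ht1 : t = 1 ∨ t = -1 :=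
    Int.isUnit_iff.mp (IsUnit.of_mul_eq_one (a := t) (b * c * d) (by linear_combination hcancel))
  have hb1 : b = 1 ∨ b = -1 :=
    Int.isUnit_iff.mp (IsUnit.of_mul_eq_one (a := b) (t * c * d) (by linear_combination hcancel))
  have hc1 : c = 1 ∨ c = -1 :=
    Int.isUnit_iff.mp (IsUnit.of_mul_eq_one (a := c) (t * b * d) (by linear_combination hcancel))
  have hd1 : d = 1 ∨ d = -1 :=
    Int.isUnit_iff.mp (IsUnit.of_mul_eq_one (a := d) (t * b * c) (by linear_combination hcancel))
  have h6 : (6 : ℤ) ≤ (p : ℤ) * q := by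
    have h2p := hp.two_le
    have h2q := hq.two_le
    have : 6 ≤ p * q := by
      rcases Nat.lt_or_ge p q with h | h
      · nlinarith
      · have h' : q < p := lt_of_le_of_ne h (fun e => hpq e.symm)
        nlinarith
    exact_mod_cast this
  rcases ht1 with rfl | rfl <;> rcases hb1 with rfl | rfl <;>
    rcases hc1 with rfl | rfl <;> rcases hd1 with rfl | rfl <;> linarith

theorem stmt12 (p q : ℕ) (hp : p.Prime) (hq : q.Prime) (hpq : p ≠ q) :
    ¬ ∃ x y z : ℤ, x^4 + y^4 + z^4 - 2*x^2*y^2 - 2*y^2*z^2 - 2*z^2*x^2 = (p : ℤ) * q := by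
  rintro ⟨x, y, z, h⟩
  set a : ℤ := x + y + z with ha
  set b : ℤ := -x - y + z with hb
  set c : ℤ := -x + y - z with hc
  set d : ℤ := x - y - z with hd
  have hs : a + b + c + d = 0 := by rw [ha, hb, hc, hd]; ring
  have hprod : a * b * c * d = (p : ℤ) * q := by
    rw [ha, hb, hc, hd]; linear_combination h
  have hP : Prime (p : ℤ) := Nat.prime_iff_prime_int.mp hp
  have hQ : Prime (q : ℤ) := Nat.prime_iff_prime_int.mp hq
  have hdvd : (p : ℤ) ∣ a * b * c * d := ⟨q, hprod⟩
  have hdvdq : (q : ℤ) ∣ a * b * c * d := ⟨p, by linear_combination hprod⟩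
  rw [hP.dvd_mul, hP.dvd_mul, hP.dvd_mul] at hdvd
  rw [hQ.dvd_mul, hQ.dvd_mul, hQ.dvd_mul] at hdvdq
  rcases hdvd with ((hpa | hpb) | hpc) | hpd <;>
    rcases hdvdq with ((hqa | hqb) | hqc) | hqd
  · exact keyL0 p q hp hq hpq a b c d hs hprod hpa hqa
  · exact keyL1 p q hp hq hpq a b c d hs hprod hpa hqb
  · exact keyL1 p q hp hq hpq a c b d (by linarith) (by linear_combination hprod) hpa hqc
  · exact keyL1 p q hp hq hpq a d b c (by linarith) (by linear_combination hprod) hpa hqd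
  · exact keyL1 p q hp hq hpq b a c d (by linarith) (by linear_combination hprod) hpb hqa
  · exact keyL0 p q hp hq hpq b a c d (by linarith) (by linear_combination hprod) hpb hqb
  · exact keyL1 p q hp hq hpq b c a d (by linarith) (by linear_combination hprod) hpb hqc
  · exact keyL1 p q hp hq hpq b d a c (by linarith) (by linear_combination hprod) hpb hqd
  · exact keyL1 p q hp hq hpq c a b d (by linarith) (by linear_combination hprod) hpc hqa
  · exact keyL1 p q hp hq hpq c b a d (by linarith) (by linear_combination hprod) hpc hqb
  · exact keyL0 p q hp hq hpq c a b d (by linarith) (by linear_combination hprod) hpc hqc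
  · exact keyL1 p q hp hq hpq c d a b (by linarith) (by linear_combination hprod) hpc hqd
  · exact keyL1 p q hp hq hpq d a b c (by linarith) (by linear_combination hprod) hpd hqa
  · exact keyL1 p q hp hq hpq d b a c (by linarith) (by linear_combination hprod) hpd hqb
  · exact keyL1 p q hp hq hpq d c a b (by linarith) (by linear_combination hprod) hpd hqc
  · exact keyL0 p q hp hq hpq d a b c (by linarith) (by linear_combination hprod) hpd hqd
end

section
/- Let p be an odd prime. Every integer solution (x, y, z) of x^4 + y^4 + z^4 - 2x^2y^2 - 2y^2z^2 - 2z^2x^2 = p^2 satisfies: one of |x|, |y|, |z| equals 0, another equals (p-1)/2, and the remaining one equals (p+1)/2. -/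
lemma helper_perm (u v w m : ℤ) (hm : 0 ≤ m)
    (h : (u = 0 ∧ ((v = m ∨ v = -m) ∧ (w = m+1 ∨ w = -(m+1)) ∨ (v = m+1 ∨ v = -(m+1)) ∧ (w = m ∨ w = -m)))
       ∨ (v = 0 ∧ ((u = m ∨ u = -m) ∧ (w = m+1 ∨ w = -(m+1)) ∨ (u = m+1 ∨ u = -(m+1)) ∧ (w = m ∨ w = -m)))
       ∨ (w = 0 ∧ ((u = m ∨ u = -m) ∧ (v = m+1 ∨ v = -(m+1)) ∨ (u = m+1 ∨ u = -(m+1)) ∧ (v = m ∨ v = -m)))) :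
    ∃ σ : Equiv.Perm (Fin 3), (![|u|, |v|, |w|] ∘ σ) = ![0, m, m + 1] := by
  have hm1 : (0:ℤ) ≤ m + 1 := by omega
  have H : (|u| = 0 ∧ |v| = m ∧ |w| = m+1) ∨ (|u| = 0 ∧ |v| = m+1 ∧ |w| = m)
      ∨ (|v| = 0 ∧ |u| = m ∧ |w| = m+1) ∨ (|v| = 0 ∧ |u| = m+1 ∧ |w| = m)
      ∨ (|w| = 0 ∧ |u| = m ∧ |v| = m+1) ∨ (|w| = 0 ∧ |u| = m+1 ∧ |v| = m) := by
    rcases h with ⟨h0, ⟨h1, h2⟩ | ⟨h1, h2⟩⟩ | ⟨h0, ⟨h1, h2⟩ | ⟨h1, h2⟩⟩ | ⟨h0, ⟨h1, h2⟩ | ⟨h1, h2⟩⟩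
    · exact Or.inl ⟨by simp [h0], (abs_eq hm).mpr h1, (abs_eq hm1).mpr h2⟩
    · exact Or.inr (Or.inl ⟨by simp [h0], (abs_eq hm1).mpr h1, (abs_eq hm).mpr h2⟩)
    · exact Or.inr (Or.inr (Or.inl ⟨by simp [h0], (abs_eq hm).mpr h1, (abs_eq hm1).mpr h2⟩))
    · exact Or.inr (Or.inr (Or.inr (Or.inl ⟨by simp [h0], (abs_eq hm1).mpr h1, (abs_eq hm).mpr h2⟩)))
    · exact Or.inr (Or.inr (Or.inr (Or.inr (Or.inl ⟨by simp [h0], (abs_eq hm).mpr h1, (abs_eq hm1).mpr h2⟩))))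
    · exact Or.inr (Or.inr (Or.inr (Or.inr (Or.inr ⟨by simp [h0], (abs_eq hm1).mpr h1, (abs_eq hm).mpr h2⟩))))
  rcases H with ⟨h0, h1, h2⟩ | ⟨h0, h1, h2⟩ | ⟨h0, h1, h2⟩ | ⟨h0, h1, h2⟩ | ⟨h0, h1, h2⟩ | ⟨h0, h1, h2⟩
  · exact ⟨⟨![0,1,2], ![0,1,2], by decide, by decide⟩, by funext i; fin_cases i <;> simp [h0, h1, h2]⟩
  · exact ⟨⟨![0,2,1], ![0,2,1], by decide, by decide⟩, by funext i; fin_cases i <;> simp [h0, h1, h2]⟩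
  · exact ⟨⟨![1,0,2], ![1,0,2], by decide, by decide⟩, by funext i; fin_cases i <;> simp [h0, h1, h2]⟩
  · exact ⟨⟨![1,2,0], ![2,0,1], by decide, by decide⟩, by funext i; fin_cases i <;> simp [h0, h1, h2]⟩
  · exact ⟨⟨![2,0,1], ![1,2,0], by decide, by decide⟩, by funext i; fin_cases i <;> simp [h0, h1, h2]⟩
  · exact ⟨⟨![2,1,0], ![2,1,0], by decide, by decide⟩, by funext i; fin_cases i <;> simp [h0, h1, h2]⟩

set_option maxHeartbeats 4000000 in
theorem stmt14 (p : ℕ) (hp : p.Prime) (hodd : Odd p) (x y z : ℤ)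
    (h : x^4 + y^4 + z^4 - 2*x^2*y^2 - 2*y^2*z^2 - 2*z^2*x^2 = (p : ℤ)^2) :
    ∃ σ : Equiv.Perm (Fin 3),
      (![|x|, |y|, |z|] ∘ σ) = ![0, ((p : ℤ) - 1) / 2, ((p : ℤ) + 1) / 2] := by
  obtain ⟨k, hk⟩ := hodd
  have hp2 : p ≠ 2 := by rintro rfl; omega
  have hp3 : 3 ≤ p := by have := hp.two_le; omega
  obtain ⟨a, ha_def⟩ : ∃ a, a = x + y + z := ⟨_, rfl⟩
  obtain ⟨b, hb_def⟩ : ∃ b, b = x + y - z := ⟨_, rfl⟩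
  obtain ⟨c, hc_def⟩ : ∃ c, c = x - y + z := ⟨_, rfl⟩
  obtain ⟨d, hd_def⟩ : ∃ d, d = x - y - z := ⟨_, rfl⟩
  have hfac : a * b * c * d = (p:ℤ)^2 := by
    rw [ha_def, hb_def, hc_def, hd_def]; linear_combination h
  have hcast : ((p:ℤ)^2).natAbs = p^2 := by
    rw [Int.natAbs_pow, Int.natAbs_natCast]
  have na : a.natAbs ∣ p^2 := by
    have h1 := Int.natAbs_dvd_natAbs.mpr (⟨b*c*d, by rw [← hfac]; ring⟩ : a ∣ (p:ℤ)^2)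
    rwa [hcast] at h1
  have nb : b.natAbs ∣ p^2 := by
    have h1 := Int.natAbs_dvd_natAbs.mpr (⟨a*c*d, by rw [← hfac]; ring⟩ : b ∣ (p:ℤ)^2)
    rwa [hcast] at h1
  have nc : c.natAbs ∣ p^2 := by
    have h1 := Int.natAbs_dvd_natAbs.mpr (⟨a*b*d, by rw [← hfac]; ring⟩ : c ∣ (p:ℤ)^2)
    rwa [hcast] at h1
  have nd : d.natAbs ∣ p^2 := by
    have h1 := Int.natAbs_dvd_natAbs.mpr (⟨a*b*c, by rw [← hfac]; ring⟩ : d ∣ (p:ℤ)^2)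
    rwa [hcast] at h1
  obtain ⟨ia, hia, ha'⟩ := (Nat.dvd_prime_pow hp).mp na
  obtain ⟨ib, hib, hb'⟩ := (Nat.dvd_prime_pow hp).mp nb
  obtain ⟨ic, hic, hc'⟩ := (Nat.dvd_prime_pow hp).mp nc
  obtain ⟨id, hid, hd'⟩ := (Nat.dvd_prime_pow hp).mp nd
  have hsum : ia + ib + ic + id = 2 := by
    have hmul : a.natAbs * b.natAbs * c.natAbs * d.natAbs = p^2 := by
      rw [← Int.natAbs_mul, ← Int.natAbs_mul, ← Int.natAbs_mul, hfac, hcast]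
    rw [ha', hb', hc', hd', ← pow_add, ← pow_add, ← pow_add] at hmul
    exact Nat.pow_right_injective hp.two_le hmul
  obtain ⟨q, hq⟩ : ∃ q : ℕ, p^2 = q := ⟨p^2, rfl⟩
  have hq9 : 9 ≤ q := by rw [← hq]; nlinarith
  have e1 : ((p:ℤ) - 1) / 2 = (k:ℤ) := by omega
  have e2 : ((p:ℤ) + 1) / 2 = (k:ℤ) + 1 := by omega
  rw [e1, e2]
  have hcases : (ia=2 ∧ ib=0 ∧ ic=0 ∧ id=0) ∨ (ia=0 ∧ ib=2 ∧ ic=0 ∧ id=0) ∨ (ia=0 ∧ ib=0 ∧ ic=2 ∧ id=0)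
      ∨ (ia=0 ∧ ib=0 ∧ ic=0 ∧ id=2) ∨ (ia=1 ∧ ib=1 ∧ ic=0 ∧ id=0) ∨ (ia=1 ∧ ib=0 ∧ ic=1 ∧ id=0)
      ∨ (ia=1 ∧ ib=0 ∧ ic=0 ∧ id=1) ∨ (ia=0 ∧ ib=1 ∧ ic=1 ∧ id=0) ∨ (ia=0 ∧ ib=1 ∧ ic=0 ∧ id=1)
      ∨ (ia=0 ∧ ib=0 ∧ ic=1 ∧ id=1) := by
    clear * - hia hib hic hid hsum
    rcases (by omega : ia = 0 ∨ ia = 1 ∨ ia = 2) with rfl|rfl|rfl <;>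
    rcases (by omega : ib = 0 ∨ ib = 1 ∨ ib = 2) with rfl|rfl|rfl <;>
    rcases (by omega : ic = 0 ∨ ic = 1 ∨ ic = 2) with rfl|rfl|rfl <;>
    rcases (by omega : id = 0 ∨ id = 1 ∨ id = 2) with rfl|rfl|rfl <;>
    first | decide | omega
  clear h hfac na nb nc nd hcast hia hib hic hid hsum hp2 hp
  rcases hcases with ⟨rfl,rfl,rfl,rfl⟩|⟨rfl,rfl,rfl,rfl⟩|⟨rfl,rfl,rfl,rfl⟩|⟨rfl,rfl,rfl,rfl⟩|⟨rfl,rfl,rfl,rfl⟩|⟨rfl,rfl,rfl,rfl⟩|⟨rfl,rfl,rfl,rfl⟩|⟨rfl,rfl,rfl,rfl⟩|⟨rfl,rfl,rfl,rfl⟩|⟨rfl,rfl,rfl,rfl⟩ <;>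
    simp only [pow_zero, pow_one, hq] at ha' hb' hc' hd' <;> clear hq
  · exfalso; clear e1 e2; omega
  · exfalso; clear e1 e2; omega
  · exfalso; clear e1 e2; omega
  · exfalso; clear e1 e2; omega
  · refine helper_perm x y z (k:ℤ) (by positivity) (Or.inr (Or.inr ?_)); clear e1 e2 hq9; omega
  · refine helper_perm x y z (k:ℤ) (by positivity) (Or.inr (Or.inl ?_)); clear e1 e2 hq9; omega
  · refine helper_perm x y z (k:ℤ) (by positivity) (Or.inl ?_); clear e1 e2 hq9; omega
  · refine helper_perm x y z (k:ℤ) (by positivity) (Or.inl ?_); clear e1 e2 hq9; omega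
  · refine helper_perm x y z (k:ℤ) (by positivity) (Or.inr (Or.inl ?_)); clear e1 e2 hq9; omega
  · refine helper_perm x y z (k:ℤ) (by positivity) (Or.inr (Or.inr ?_)); clear e1 e2 hq9; omega
end
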